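/- [Maximum crossing number theorem] Let t ≥ 1 and n ≥ 2, and let k ≥ 1 be a natural number. If a tromino tiling of the 3t×n rectangle R(3t,n) has the property that every interior horizontal grid line and every interior vertical grid line is crossed by at least k tiles, then k ≤ 2t − 1 and 3k ≤ 2n. -/
import Mathlib


/-- The m×n rectangle: cells {0,…,m−1}×{0,…,n−1}. -/
def rect (m n : ℕ) : Finset (ℕ × ℕ) := Finset.range m ×ˢ Finset.range n

/-- The 2×2 block with top-left corner (i,j). -/
def block (i j : ℕ) : Finset (ℕ × ℕ) :=
  {(i, j), (i, j + 1), (i + 1, j), (i + 1, j + 1)}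

/-- An L-tromino: a 2×2 block minus one of its cells. -/
def IsLTromino (T : Finset (ℕ × ℕ)) : Prop :=
  ∃ i j c, c ∈ block i j ∧ T = block i j \ {c}

/-- A tromino tiling of R(m,n): a partition of the rectangle into L-trominoes. -/
def IsTrominoTiling (m n : ℕ) (𝒯 : Finset (Finset (ℕ × ℕ))) : Prop :=
  (∀ T ∈ 𝒯, IsLTromino T) ∧
  (∀ T₁ ∈ 𝒯, ∀ T₂ ∈ 𝒯, T₁ ≠ T₂ → Disjoint T₁ T₂) ∧
  𝒯.sup id = rect m n

/-- Tile T crosses the i-th horizontal grid line. -/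
def CrossesH (T : Finset (ℕ × ℕ)) (i : ℕ) : Prop :=
  (∃ c ∈ T, c.1 < i) ∧ (∃ c ∈ T, i ≤ c.1)

/-- Tile T crosses the j-th vertical grid line. -/
def CrossesV (T : Finset (ℕ × ℕ)) (j : ℕ) : Prop :=
  (∃ c ∈ T, c.2 < j) ∧ (∃ c ∈ T, j ≤ c.2)

/-- A tiling of R(m,n) is faultfree if every interior horizontal and vertical
grid line is crossed by some tile. -/
def IsFaultfree (m n : ℕ) (𝒯 : Finset (Finset (ℕ × ℕ))) : Prop :=
  (∀ i, 0 < i → i < m → ∃ T ∈ 𝒯, CrossesH T i) ∧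
  (∀ j, 0 < j → j < n → ∃ T ∈ 𝒯, CrossesV T j)

open Classical in
/-- The number of tiles of 𝒯 crossing the i-th horizontal grid line. -/
noncomputable def crossCountH (𝒯 : Finset (Finset (ℕ × ℕ))) (i : ℕ) : ℕ :=
  (𝒯.filter fun T => CrossesH T i).card

open Classical in
/-- The number of tiles of 𝒯 crossing the j-th vertical grid line. -/
noncomputable def crossCountV (𝒯 : Finset (Finset (ℕ × ℕ))) (j : ℕ) : ℕ :=
  (𝒯.filter fun T => CrossesV T j).card

lemma block_eq (i j : ℕ) :
    block i j = ({i, i + 1} : Finset ℕ) ×ˢ ({j, j + 1} : Finset ℕ) := by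
  ext ⟨a, b⟩
  simp [block, Prod.ext_iff]
  tauto

lemma tromino_card {T : Finset (ℕ × ℕ)} (h : IsLTromino T) : T.card = 3 := by
  obtain ⟨i, j, c, hc, rfl⟩ := h
  have hb : (block i j).card = 4 := by
    rw [block_eq, Finset.card_product,
      Finset.card_pair (by omega), Finset.card_pair (by omega)]
  rw [Finset.card_sdiff_of_subset (Finset.singleton_subset_iff.mpr hc), hb]
  rfl

lemma tromino_span {T : Finset (ℕ × ℕ)} (h : IsLTromino T) :
    ∃ i j, ∀ c ∈ T, (c.1 = i ∨ c.1 = i + 1) ∧ (c.2 = j ∨ c.2 = j + 1) := by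
  obtain ⟨i, j, c, hc, rfl⟩ := h
  refine ⟨i, j, fun d hd => ?_⟩
  have hd' := (Finset.mem_sdiff.mp hd).1
  rw [block_eq] at hd'
  simpa [Finset.mem_product] using hd'

open Classical in
lemma crossV_struct {m n : ℕ} {𝒯 : Finset (Finset (ℕ × ℕ))}
    (hT : IsTrominoTiling m n 𝒯) (j : ℕ) (hj : 0 < j) :
    ((𝒯.filter fun T => CrossesV T j).biUnion id ⊆
      Finset.range m ×ˢ ({j - 1, j} : Finset ℕ)) ∧
    ((𝒯.filter fun T => CrossesV T j).biUnion id).card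
      = 3 * crossCountV 𝒯 j := by
  obtain ⟨h1, h2, h3⟩ := hT
  constructor
  · intro c hc
    simp only [Finset.mem_biUnion, id] at hc
    obtain ⟨T, hTS, hcT⟩ := hc
    rw [Finset.mem_filter] at hTS
    obtain ⟨hTm, ⟨⟨c1, hc1, hc1'⟩, ⟨c2, hc2, hc2'⟩⟩⟩ := hTS
    obtain ⟨a, b, hspan⟩ := tromino_span (h1 T hTm)
    have hcc : c ∈ rect m n := by
      rw [← h3]
      exact Finset.le_sup (f := id) hTm hcT
    rw [rect, Finset.mem_product, Finset.mem_range, Finset.mem_range] at hcc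
    have e1 := (hspan c1 hc1).2
    have e2 := (hspan c2 hc2).2
    have e := (hspan c hcT).2
    rw [Finset.mem_product]
    refine ⟨Finset.mem_range.mpr hcc.1, ?_⟩
    simp only [Finset.mem_insert, Finset.mem_singleton]
    omega
  · have hd : ∀ x ∈ 𝒯.filter (fun T => CrossesV T j), ∀ y ∈ 𝒯.filter (fun T => CrossesV T j),
        x ≠ y → Disjoint (id x) (id y) := fun x hx y hy hxy =>
      h2 x (Finset.mem_filter.mp hx).1 y (Finset.mem_filter.mp hy).1 hxy
    rw [Finset.card_biUnion hd]
    rw [crossCountV]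
    simp only [id_eq]
    rw [Finset.sum_congr rfl
      (fun T hTS => tromino_card (h1 T (Finset.mem_filter.mp hTS).1)),
      Finset.sum_const, smul_eq_mul, mul_comm]

open Classical in
lemma crossH_struct {m n : ℕ} {𝒯 : Finset (Finset (ℕ × ℕ))}
    (hT : IsTrominoTiling m n 𝒯) (i : ℕ) (hi : 0 < i) :
    ((𝒯.filter fun T => CrossesH T i).biUnion id ⊆
      ({i - 1, i} : Finset ℕ) ×ˢ Finset.range n) ∧
    ((𝒯.filter fun T => CrossesH T i).biUnion id).card
      = 3 * crossCountH 𝒯 i := by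
  obtain ⟨h1, h2, h3⟩ := hT
  constructor
  · intro c hc
    simp only [Finset.mem_biUnion, id] at hc
    obtain ⟨T, hTS, hcT⟩ := hc
    rw [Finset.mem_filter] at hTS
    obtain ⟨hTm, ⟨⟨c1, hc1, hc1'⟩, ⟨c2, hc2, hc2'⟩⟩⟩ := hTS
    obtain ⟨a, b, hspan⟩ := tromino_span (h1 T hTm)
    have hcc : c ∈ rect m n := by
      rw [← h3]
      exact Finset.le_sup (f := id) hTm hcT
    rw [rect, Finset.mem_product, Finset.mem_range, Finset.mem_range] at hcc
    have e1 := (hspan c1 hc1).1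
    have e2 := (hspan c2 hc2).1
    have e := (hspan c hcT).1
    rw [Finset.mem_product]
    refine ⟨?_, Finset.mem_range.mpr hcc.2⟩
    simp only [Finset.mem_insert, Finset.mem_singleton]
    omega
  · have hd : ∀ x ∈ 𝒯.filter (fun T => CrossesH T i), ∀ y ∈ 𝒯.filter (fun T => CrossesH T i),
        x ≠ y → Disjoint (id x) (id y) := fun x hx y hy hxy =>
      h2 x (Finset.mem_filter.mp hx).1 y (Finset.mem_filter.mp hy).1 hxy
    rw [Finset.card_biUnion hd]
    rw [crossCountH]
    simp only [id_eq]
    rw [Finset.sum_congr rfl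
      (fun T hTS => tromino_card (h1 T (Finset.mem_filter.mp hTS).1)),
      Finset.sum_const, smul_eq_mul, mul_comm]

/-- STATEMENT 3 [Maximum crossing number theorem]: if every interior grid line of
a tromino tiling of R(3t,n) is crossed by at least k tiles (t ≥ 1, n ≥ 2, k ≥ 1),
then k ≤ 2t − 1 and 3k ≤ 2n. -/
theorem maximum_crossing_number (t n k : ℕ) (ht : 1 ≤ t) (hn : 2 ≤ n) (hk : 1 ≤ k)
    (𝒯 : Finset (Finset (ℕ × ℕ))) (hT : IsTrominoTiling (3 * t) n 𝒯)
    (hH : ∀ i, 0 < i → i < 3 * t → k ≤ crossCountH 𝒯 i)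
    (hV : ∀ j, 0 < j → j < n → k ≤ crossCountV 𝒯 j) :
    k ≤ 2 * t - 1 ∧ 3 * k ≤ 2 * n := by
  classical
  have hHb : 3 * crossCountH 𝒯 1 ≤ 2 * n := by
    obtain ⟨hsub, hcard⟩ := crossH_struct hT 1 one_pos
    calc 3 * crossCountH 𝒯 1 = _ := hcard.symm
    _ ≤ (({0, 1} : Finset ℕ) ×ˢ Finset.range n).card := Finset.card_le_card hsub
    _ = 2 * n := by rw [Finset.card_product, Finset.card_pair (by omega), Finset.card_range]
  have h3k : 3 * k ≤ 2 * n := by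
    have := hH 1 one_pos (by omega)
    omega
  have hVb : ∀ j, 0 < j → j < n → 3 * crossCountV 𝒯 j ≤ 6 * t := by
    intro j hj hjn
    obtain ⟨hsub, hcard⟩ := crossV_struct hT j hj
    calc 3 * crossCountV 𝒯 j = _ := hcard.symm
    _ ≤ (Finset.range (3 * t) ×ˢ ({j - 1, j} : Finset ℕ)).card := Finset.card_le_card hsub
    _ = 6 * t := by
        rw [Finset.card_product, Finset.card_pair (by omega), Finset.card_range]; ring
  refine ⟨?_, h3k⟩
  by_contra hcon
  have hk1 := hV 1 one_pos (by omega)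
  have hv1b := hVb 1 one_pos (by omega)
  -- k ≤ 2t and k ≥ 2t, so k = 2t
  have hkeq : k = 2 * t := by omega
  have hn3 : 3 * t ≤ n := by omega
  have h2n : 2 < n := by omega
  have hk2 := hV 2 (by omega) h2n
  have hv2b := hVb 2 (by omega) h2n
  have hc1 : crossCountV 𝒯 1 = 2 * t := by omega
  have hc2 : crossCountV 𝒯 2 = 2 * t := by omega
  obtain ⟨hsub1, hcard1⟩ := crossV_struct hT 1 one_pos
  obtain ⟨hsub2, hcard2⟩ := crossV_struct hT 2 (by omega)
  have heq1 : (𝒯.filter fun T => CrossesV T 1).biUnion id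
      = Finset.range (3 * t) ×ˢ ({0, 1} : Finset ℕ) := by
    apply Finset.eq_of_subset_of_card_le hsub1
    rw [Finset.card_product, Finset.card_pair (by omega), Finset.card_range, hcard1, hc1]
    omega
  have heq2 : (𝒯.filter fun T => CrossesV T 2).biUnion id
      = Finset.range (3 * t) ×ˢ ({1, 2} : Finset ℕ) := by
    apply Finset.eq_of_subset_of_card_le hsub2
    rw [Finset.card_product, Finset.card_pair (by omega), Finset.card_range, hcard2, hc2]
    omega
  have hm1 : ((0, 1) : ℕ × ℕ) ∈ (𝒯.filter fun T => CrossesV T 1).biUnion id := by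
    rw [heq1, Finset.mem_product]
    constructor
    · exact Finset.mem_range.mpr (by omega)
    · simp
  have hm2 : ((0, 1) : ℕ × ℕ) ∈ (𝒯.filter fun T => CrossesV T 2).biUnion id := by
    rw [heq2, Finset.mem_product]
    constructor
    · exact Finset.mem_range.mpr (by omega)
    · simp
  simp only [Finset.mem_biUnion, id] at hm1 hm2
  obtain ⟨T1, hT1, hmem1⟩ := hm1
  obtain ⟨T2, hT2, hmem2⟩ := hm2
  rw [Finset.mem_filter] at hT1 hT2
  obtain ⟨hT1m, ⟨⟨c1, hc1T, hc1'⟩, -⟩⟩ := hT1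
  obtain ⟨hT2m, ⟨-, ⟨c2, hc2T, hc2'⟩⟩⟩ := hT2
  by_cases heq : T1 = T2
  · subst heq
    obtain ⟨a, b, hspan⟩ := tromino_span (hT.1 T1 hT1m)
    have e1 := (hspan c1 hc1T).2
    have e2 := (hspan c2 hc2T).2
    omega
  · exact Finset.disjoint_left.mp (hT.2.1 T1 hT1m T2 hT2m heq) hmem1 hmem2
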